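/- Let U_1,...,U_n be independent uniform random variables on [-1,1] and X = (1/n)∑ U_i. Then the function t ↦ P(X > t)^{1/n} is concave on [-1,1]. -/

import Mathlib

open MeasureTheory Set

/-- The distribution of `n` i.i.d. uniform random variables on `[-1,1]`. -/
noncomputable def unifCube (n : ℕ) : Measure (Fin n → ℝ) :=
  Measure.pi fun _ => (2 : ENNReal)⁻¹ • volume.restrict (Icc (-1 : ℝ) 1)

/-- `X = (1/n) ∑ᵢ Uᵢ`, the average of the coordinates. -/
noncomputable def avgCoord (n : ℕ) (u : Fin n → ℝ) : ℝ := (∑ i, u i) / n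

/-- `p_X(t) = P(X > t)`. -/
noncomputable def tailP (n : ℕ) (t : ℝ) : ℝ :=
  (unifCube n {u | t < avgCoord n u}).toReal

/-- `m_X(t) = E[X ∣ X > t]`, the truncated mean. -/
noncomputable def truncMean (n : ℕ) (t : ℝ) : ℝ :=
  (∫ u in {u | t < avgCoord n u}, avgCoord n u ∂(unifCube n)) / tailP n t

namespace TailAux

/-! ### One-dimensional superlevel machinery -/

/-- Superlevel set of `x ↦ φ (s - x)` within `[-1,1]`. -/
def levSet (φ : ℝ → ℝ) (s c : ℝ) : Set ℝ := {x | x ∈ Icc (-1:ℝ) 1 ∧ c < φ (s - x)}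

/-- Length of the superlevel set. -/
noncomputable def lev (φ : ℝ → ℝ) (s c : ℝ) : ℝ := (volume (levSet φ s c)).toReal

variable {φ : ℝ → ℝ} {s c : ℝ}

lemma levSet_subset : levSet φ s c ⊆ Icc (-1:ℝ) 1 := fun _ hx => hx.1

lemma volume_levSet_ne_top : volume (levSet φ s c) ≠ ⊤ := by
  refine ne_top_of_le_ne_top ?_ (measure_mono (levSet_subset (φ := φ) (s := s) (c := c)))
  simp [Real.volume_Icc]

lemma lev_nonneg : 0 ≤ lev φ s c := ENNReal.toReal_nonneg

lemma lev_le_two : lev φ s c ≤ 2 := by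
  have h : volume (levSet φ s c) ≤ volume (Icc (-1:ℝ) 1) := measure_mono levSet_subset
  rw [Real.volume_Icc] at h
  have := ENNReal.toReal_mono (by simp) h
  rw [ENNReal.toReal_ofReal (by norm_num)] at this
  simpa [lev] using this.trans_eq (by norm_num)

lemma lev_anti : Antitone (lev φ s) := by
  intro c c' h
  exact ENNReal.toReal_mono volume_levSet_ne_top
    (measure_mono fun x hx => ⟨hx.1, lt_of_le_of_lt h hx.2⟩)

lemma lev_eq_zero (hanti : Antitone φ) (h : φ (s - 1) ≤ c) : lev φ s c = 0 := by
  have : levSet φ s c = ∅ := by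
    ext x
    simp only [levSet, mem_setOf_eq, mem_empty_iff_false, iff_false, not_and]
    intro hx
    exact not_lt.2 ((hanti (by linarith [hx.2] : s - 1 ≤ s - x)).trans h)
  simp [lev, this]

lemma mem_levSet_of_le (hanti : Antitone φ) {x y : ℝ} (hx : x ∈ levSet φ s c)
    (hxy : x ≤ y) (hy : y ≤ 1) : y ∈ levSet φ s c :=
  ⟨⟨hx.1.1.trans hxy, hy⟩, lt_of_lt_of_le hx.2 (hanti (by linarith))⟩

lemma Ioo_subset_levSet (hanti : Antitone φ) :
    Ioo (1 - lev φ s c) 1 ⊆ levSet φ s c := by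
  intro y hy
  have hex : ∃ x ∈ levSet φ s c, x ≤ y := by
    by_contra h
    push_neg at h
    have hsub : levSet φ s c ⊆ Ioc y 1 := fun x hx => ⟨h x hx, hx.1.2⟩
    have hle : volume (levSet φ s c) ≤ volume (Ioc y 1) := measure_mono hsub
    rw [Real.volume_Ioc] at hle
    have := ENNReal.toReal_mono (by simp) hle
    rw [ENNReal.toReal_ofReal (by linarith [hy.2])] at this
    have h1 : lev φ s c ≤ 1 - y := this
    linarith [hy.1]
  obtain ⟨x, hx, hxy⟩ := hex
  exact mem_levSet_of_le hanti hx hxy hy.2.le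

/-! ### Key superlevel inequalities -/

lemma lev_key {M : ℝ} (hφ0 : ∀ t, 0 ≤ φ t) (hanti : Antitone φ)
    (hconc : ConcaveOn ℝ (Iic M) φ) (hzero : ∀ t, M ≤ t → φ t = 0)
    {s0 s1 u v a b : ℝ} (ha : 0 < a) (hb : 0 < b) (hab : a + b = 1)
    (hu : 0 < u) (hv : 0 < v) (h0 : u < φ (s0 - 1)) (h1 : v < φ (s1 - 1)) :
    a * lev φ s0 u + b * lev φ s1 v ≤ lev φ (a*s0+b*s1) (a*u+b*v) := by
  set a0 := lev φ s0 u with ha0def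
  set a1 := lev φ s1 v with ha1def
  have ha0 : 0 ≤ a0 := lev_nonneg
  have ha1 : 0 ≤ a1 := lev_nonneg
  have hsub : Ioo (1 - (a*a0+b*a1)) 1 ⊆ levSet φ (a*s0+b*s1) (a*u+b*v) := by
    intro y hy
    have hd : 0 < a*a0 + b*a1 := by linarith [hy.1, hy.2]
    set θ := (1-y)/(a*a0+b*a1) with hθdef
    have hθ0 : 0 < θ := div_pos (by linarith [hy.2]) hd
    have hθ1 : θ < 1 := (div_lt_one hd).2 (by linarith [hy.1])
    have hθprod : θ * (a*a0+b*a1) = 1 - y := div_mul_cancel₀ _ hd.ne'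
    have hy0 : (1 - θ*a0) ∈ levSet φ s0 u := by
      rcases eq_or_lt_of_le ha0 with h|h
      · rw [← h, mul_zero, sub_zero]
        exact ⟨right_mem_Icc.2 (by norm_num), h0⟩
      · exact Ioo_subset_levSet hanti ⟨by nlinarith, by nlinarith⟩
    have hy1 : (1 - θ*a1) ∈ levSet φ s1 v := by
      rcases eq_or_lt_of_le ha1 with h|h
      · rw [← h, mul_zero, sub_zero]
        exact ⟨right_mem_Icc.2 (by norm_num), h1⟩
      · exact Ioo_subset_levSet hanti ⟨by nlinarith, by nlinarith⟩
    have hyc : y = a*(1-θ*a0) + b*(1-θ*a1) := by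
      have hexp : a*(1-θ*a0) + b*(1-θ*a1) = (a+b) - θ*(a*a0+b*a1) := by ring
      rw [hexp, hab, hθprod]; ring
    have l0 : u < φ (s0 - (1-θ*a0)) := hy0.2
    have l1 : v < φ (s1 - (1-θ*a1)) := hy1.2
    have hw0 : s0 - (1-θ*a0) ≤ M := by
      by_contra hcon
      push_neg at hcon
      rw [hzero _ hcon.le] at l0
      linarith
    have hw1 : s1 - (1-θ*a1) ≤ M := by
      by_contra hcon
      push_neg at hcon
      rw [hzero _ hcon.le] at l1
      linarith
    refine ⟨⟨?_, hy.2.le⟩, ?_⟩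
    · have h00 := hy0.1.1
      have h11 := hy1.1.1
      rw [hyc]
      nlinarith [mul_le_mul_of_nonneg_left h00 ha.le, mul_le_mul_of_nonneg_left h11 hb.le]
    · have harg : (a*s0+b*s1) - y = a*(s0 - (1-θ*a0)) + b*(s1-(1-θ*a1)) := by
        rw [hyc]; ring
      rw [harg]
      have hcc := hconc.2 (mem_Iic.2 hw0) (mem_Iic.2 hw1) ha.le hb.le hab
      simp only [smul_eq_mul] at hcc
      nlinarith [mul_lt_mul_of_pos_left l0 ha, mul_lt_mul_of_pos_left l1 hb]
  have hmono : volume (Ioo (1 - (a*a0+b*a1)) 1) ≤ volume (levSet φ (a*s0+b*s1) (a*u+b*v)) :=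
    measure_mono hsub
  have hIoo : volume (Ioo (1 - (a*a0+b*a1)) 1) = ENNReal.ofReal (a*a0+b*a1) := by
    rw [Real.volume_Ioo]; ring_nf
  rw [hIoo] at hmono
  calc a*a0 + b*a1 = (ENNReal.ofReal (a*a0+b*a1)).toReal :=
        (ENNReal.toReal_ofReal (by positivity)).symm
    _ ≤ lev φ (a*s0+b*s1) (a*u+b*v) := ENNReal.toReal_mono volume_levSet_ne_top hmono

lemma lev_key_one {M : ℝ} (hφ0 : ∀ t, 0 ≤ φ t) (hanti : Antitone φ)
    (hconc : ConcaveOn ℝ (Iic M) φ) (hzero : ∀ t, M ≤ t → φ t = 0)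
    {s0 s1 v a b : ℝ} (ha : 0 ≤ a) (hb : 0 < b) (hab : a + b = 1)
    (hv : 0 < v) (hs0 : s0 ≤ M + 1) :
    b * lev φ s1 v ≤ lev φ (a*s0+b*s1) (b*v) := by
  set a1 := lev φ s1 v with ha1def
  have ha1 : 0 ≤ a1 := lev_nonneg
  rcases eq_or_lt_of_le ha1 with h|h
  · rw [← h, mul_zero]
    exact lev_nonneg
  have hsub : Ioo (1 - b*a1) 1 ⊆ levSet φ (a*s0+b*s1) (b*v) := by
    intro y hy
    have hd : 0 < b*a1 := by positivity
    set θ := (1-y)/(b*a1) with hθdef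
    have hθ0 : 0 < θ := div_pos (by linarith [hy.2]) hd
    have hθ1 : θ < 1 := (div_lt_one hd).2 (by linarith [hy.1])
    have hθprod : θ * (b*a1) = 1 - y := div_mul_cancel₀ _ hd.ne'
    have hy1 : (1 - θ*a1) ∈ levSet φ s1 v :=
      Ioo_subset_levSet hanti ⟨by nlinarith, by nlinarith⟩
    have hyc : y = a*1 + b*(1-θ*a1) := by
      have hexp : a*1 + b*(1-θ*a1) = (a+b) - θ*(b*a1) := by ring
      rw [hexp, hab, hθprod]; ring
    have l1 : v < φ (s1 - (1-θ*a1)) := hy1.2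
    have hw1 : s1 - (1-θ*a1) ≤ M := by
      by_contra hcon
      push_neg at hcon
      rw [hzero _ hcon.le] at l1
      linarith
    have hw0 : s0 - 1 ≤ M := by linarith
    refine ⟨⟨?_, hy.2.le⟩, ?_⟩
    · have h11 := hy1.1.1
      rw [hyc]
      nlinarith [mul_le_mul_of_nonneg_left h11 hb.le]
    · have harg : (a*s0+b*s1) - y = a*(s0 - 1) + b*(s1-(1-θ*a1)) := by
        rw [hyc]; ring
      rw [harg]
      have hcc := hconc.2 (mem_Iic.2 hw0) (mem_Iic.2 hw1) ha hb.le hab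
      simp only [smul_eq_mul] at hcc
      nlinarith [mul_lt_mul_of_pos_left l1 hb, mul_nonneg ha (hφ0 (s0-1))]
  have hmono : volume (Ioo (1 - b*a1) 1) ≤ volume (levSet φ (a*s0+b*s1) (b*v)) :=
    measure_mono hsub
  have hIoo : volume (Ioo (1 - b*a1) 1) = ENNReal.ofReal (b*a1) := by
    rw [Real.volume_Ioo]; ring_nf
  rw [hIoo] at hmono
  calc b*a1 = (ENNReal.ofReal (b*a1)).toReal := (ENNReal.toReal_ofReal (by positivity)).symm
    _ ≤ lev φ (a*s0+b*s1) (b*v) := ENNReal.toReal_mono volume_levSet_ne_top hmono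

/-! ### Layer cake and scaling -/

lemma integrableOn_pow {m : ℕ} (hφ0 : ∀ t, 0 ≤ φ t) (hanti : Antitone φ) (s : ℝ) :
    IntegrableOn (fun x => φ (s - x) ^ m) (Icc (-1:ℝ) 1) := by
  have hmeas : Measurable fun x : ℝ => φ (s - x) ^ m :=
    ((hanti.measurable).comp (measurable_const.sub measurable_id)).pow_const m
  refine ⟨hmeas.aestronglyMeasurable, ?_⟩
  refine HasFiniteIntegral.restrict_of_bounded (C := φ (s - 1) ^ m) (by simp [Real.volume_Icc]) ?_
  refine (ae_restrict_iff' measurableSet_Icc).2 (Filter.Eventually.of_forall fun x hx => ?_)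
  rw [Real.norm_eq_abs, abs_of_nonneg (pow_nonneg (hφ0 _) m)]
  exact pow_le_pow_left₀ (hφ0 _) (hanti (by linarith [hx.2])) m

lemma layercake {m : ℕ} (hm : m ≠ 0) (hφ0 : ∀ t, 0 ≤ φ t) (hanti : Antitone φ) (s : ℝ) :
    ∫ x in Icc (-1:ℝ) 1, φ (s - x) ^ m
      = ∫ c in Ioi (0:ℝ), lev φ s (c ^ ((m:ℝ)⁻¹)) := by
  rw [Integrable.integral_eq_integral_meas_lt (integrableOn_pow hφ0 hanti s)
    (Filter.Eventually.of_forall fun x => pow_nonneg (hφ0 _) m)]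
  refine setIntegral_congr_fun measurableSet_Ioi fun c hc => ?_
  have hc' : (0:ℝ) < c := hc
  have hsetmeas : MeasurableSet {x : ℝ | c < φ (s - x) ^ m} :=
    measurableSet_lt measurable_const
      (((hanti.measurable).comp (measurable_const.sub measurable_id)).pow_const m)
  rw [measureReal_def, Measure.restrict_apply hsetmeas]
  unfold lev
  congr 2
  ext x
  simp only [mem_inter_iff, mem_setOf_eq, levSet, mem_Icc]
  have hiff : c < φ (s - x) ^ m ↔ c ^ ((m:ℝ)⁻¹) < φ (s - x) := by
    conv_lhs => rw [← Real.rpow_inv_natCast_pow hc'.le hm]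
    exact pow_lt_pow_iff_left₀ (Real.rpow_nonneg hc'.le _) (hφ0 _) hm
  tauto

lemma integrable_lev {m : ℕ} (hm : m ≠ 0) (hφ0 : ∀ t, 0 ≤ φ t) (hanti : Antitone φ)
    {k : ℝ} (hk : 0 < k) (s : ℝ) :
    Integrable (fun c => lev φ s ((k*c) ^ ((m:ℝ)⁻¹))) (volume.restrict (Ioi (0:ℝ))) := by
  set R := φ (s - 1) ^ m with hRdef
  have hR : 0 ≤ R := pow_nonneg (hφ0 _) m
  have hmeas : Measurable fun c : ℝ => lev φ s ((k*c) ^ ((m:ℝ)⁻¹)) :=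
    (lev_anti (φ := φ) (s := s)).measurable.comp
      ((Real.continuous_rpow_const (by positivity)).measurable.comp (measurable_id.const_mul k))
  have hg : Integrable ((Ioc (0:ℝ) (R/k)).indicator fun _ => (2:ℝ))
      (volume.restrict (Ioi (0:ℝ))) := by
    rw [integrable_indicator_iff measurableSet_Ioc]
    refine integrableOn_const (ne_of_lt ?_)
    calc (volume.restrict (Ioi (0:ℝ))) (Ioc 0 (R/k)) ≤ volume (Ioc (0:ℝ) (R/k)) :=
          Measure.restrict_le_self _
      _ < ⊤ := by simp [Real.volume_Ioc]
  refine Integrable.mono' hg hmeas.aestronglyMeasurable ?_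
  refine (ae_restrict_iff' measurableSet_Ioi).2 (Filter.Eventually.of_forall fun c hc => ?_)
  have hc' : (0:ℝ) < c := hc
  rcases le_or_gt c (R/k) with hcR | hcR
  · rw [Set.indicator_of_mem (show c ∈ Ioc (0:ℝ) (R/k) from ⟨hc', hcR⟩)]
    rw [Real.norm_eq_abs, abs_of_nonneg lev_nonneg]
    exact lev_le_two
  · rw [Set.indicator_of_notMem (fun hmem : c ∈ Ioc (0:ℝ) (R/k) => absurd hmem.2 (not_le.2 hcR))]
    have hkc : R ≤ k * c := by
      rw [div_lt_iff₀ hk] at hcR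
      linarith
    have : φ (s - 1) ≤ (k*c) ^ ((m:ℝ)⁻¹) := by
      calc φ (s - 1) = R ^ ((m:ℝ)⁻¹) := (Real.pow_rpow_inv_natCast (hφ0 _) hm).symm
        _ ≤ (k*c) ^ ((m:ℝ)⁻¹) := Real.rpow_le_rpow hR hkc (by positivity)
    rw [lev_eq_zero hanti this]
    simp

lemma integral_lev_scale {m : ℕ} {k : ℝ} (hk : 0 < k) (s : ℝ) :
    ∫ c in Ioi (0:ℝ), lev φ s ((k*c) ^ ((m:ℝ)⁻¹))
      = k⁻¹ * ∫ c in Ioi (0:ℝ), lev φ s (c ^ ((m:ℝ)⁻¹)) := by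
  have h := integral_comp_mul_left_Ioi (fun c => lev φ s (c ^ ((m:ℝ)⁻¹))) 0 hk
  rw [mul_zero] at h
  simpa [smul_eq_mul] using h

/-! ### Two-point Hölder inequality -/

lemma holder_aux {m : ℕ} {a b β0 β1 g0 g1 : ℝ} (ha : 0 < a) (hb : 0 < b) (hab : a + b = 1)
    (hβ0 : 0 < β0) (hβ1 : 0 < β1) (hg0 : 0 < g0) (hg1 : 0 < g1) :
    a * g0 ^ (((m:ℝ)+1)⁻¹) + b * g1 ^ (((m:ℝ)+1)⁻¹) ≤
      (a * ((a*β0+b*β1)/β0)^m * g0 + b * ((a*β0+b*β1)/β1)^m * g1) ^ (((m:ℝ)+1)⁻¹) := by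
  set p : ℝ := ((m:ℝ)+1)⁻¹ with hpdef
  have hm1 : (0:ℝ) < (m:ℝ)+1 := by positivity
  have hp : 0 < p := by positivity
  have hw : 0 ≤ (m:ℝ)*p := by positivity
  have hm1p : ((m:ℝ)+1)*p = 1 := mul_inv_cancel₀ hm1.ne'
  have hwp : (m:ℝ)*p + p = 1 := by linear_combination hm1p
  set B := a*β0+b*β1 with hBdef
  have hB : 0 < B := by positivity
  set C := a*(g0/β0^m) + b*(g1/β1^m) with hCdef
  have hC : 0 < C := by positivity
  have hinner : a * (B/β0)^m * g0 + b * (B/β1)^m * g1 = B^m * C := by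
    rw [div_pow, div_pow, hCdef]
    field_simp
  rw [hinner]
  have hBC : (B^m * C) ^ p = B^((m:ℝ)*p) * C^p := by
    rw [Real.mul_rpow (by positivity) hC.le, ← Real.rpow_natCast B m, ← Real.rpow_mul hB.le]
  rw [hBC]
  have key : ∀ β g : ℝ, 0 < β → 0 < g →
      g ^ p ≤ ((m:ℝ)*p*(β/B) + p*((g/β^m)/C)) * (B^((m:ℝ)*p) * C^p) := by
    intro β g hβ hg
    have hAM := Real.geom_mean_le_arith_mean2_weighted hw hp.le
      (le_of_lt (div_pos hβ hB)) (le_of_lt (div_pos (div_pos hg (pow_pos hβ m)) hC)) hwp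
    have hident : (β/B)^((m:ℝ)*p) * ((g/β^m)/C)^p * (B^((m:ℝ)*p) * C^p) = g ^ p := by
      rw [Real.div_rpow hβ.le hB.le, Real.div_rpow (by positivity) hC.le,
        Real.div_rpow hg.le (by positivity)]
      have hβm : ((β^m:ℝ)) ^ p = β ^ ((m:ℝ)*p) := by
        rw [← Real.rpow_natCast β m, ← Real.rpow_mul hβ.le]
      rw [hβm]
      have h1 : B ^ ((m:ℝ)*p) ≠ 0 := by positivity
      have h2 : C ^ p ≠ 0 := by positivity
      have h3 : β ^ ((m:ℝ)*p) ≠ 0 := by positivity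
      field_simp
    calc g ^ p = (β/B)^((m:ℝ)*p) * ((g/β^m)/C)^p * (B^((m:ℝ)*p) * C^p) := hident.symm
      _ ≤ ((m:ℝ)*p*(β/B) + p*((g/β^m)/C)) * (B^((m:ℝ)*p) * C^p) :=
          mul_le_mul_of_nonneg_right hAM (by positivity)
  have k0 := key β0 g0 hβ0 hg0
  have k1 := key β1 g1 hβ1 hg1
  have t0 := mul_le_mul_of_nonneg_left k0 ha.le
  have t1 := mul_le_mul_of_nonneg_left k1 hb.le
  have e1 : a*(β0/B) + b*(β1/B) = 1 := by
    rw [hBdef]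
    field_simp
  have e2 : a*((g0/β0^m)/C) + b*((g1/β1^m)/C) = 1 := by
    have hβ0m : (β0:ℝ)^m ≠ 0 := by positivity
    have hβ1m : (β1:ℝ)^m ≠ 0 := by positivity
    rw [hCdef]
    field_simp
  have hsum : a*((m:ℝ)*p*(β0/B) + p*((g0/β0^m)/C)) + b*((m:ℝ)*p*(β1/B) + p*((g1/β1^m)/C))
      = 1 := by linear_combination ((m:ℝ)*p) * e1 + p * e2 + hwp
  calc a * g0^p + b*g1^p
      ≤ (a*((m:ℝ)*p*(β0/B) + p*((g0/β0^m)/C)) + b*((m:ℝ)*p*(β1/B) + p*((g1/β1^m)/C)))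
          * (B^((m:ℝ)*p) * C^p) := by nlinarith [t0, t1]
    _ = B^((m:ℝ)*p) * C^p := by rw [hsum, one_mul]

/-! ### The one-dimensional induction step -/

lemma oneDStep {m : ℕ} (hm : m ≠ 0) {M : ℝ}
    (hφ0 : ∀ t, 0 ≤ φ t) (hanti : Antitone φ)
    (hconc : ConcaveOn ℝ (Iic M) φ) (hzero : ∀ t, M ≤ t → φ t = 0) :
    ConcaveOn ℝ (Iic (M+1))
      (fun s => (∫ x in Icc (-1:ℝ) 1, φ (s - x) ^ m) ^ (((m:ℝ)+1)⁻¹)) := by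
  have hmpos : (0:ℝ) < m := by exact_mod_cast Nat.pos_of_ne_zero hm
  have hp : (0:ℝ) < ((m:ℝ)+1)⁻¹ := by positivity
  set G : ℝ → ℝ := fun s => ∫ x in Icc (-1:ℝ) 1, φ (s - x) ^ m with hGdef
  have hGnn : ∀ s, 0 ≤ G s := fun s =>
    setIntegral_nonneg measurableSet_Icc fun x _ => pow_nonneg (hφ0 _) m
  have hGlc : ∀ s, G s = ∫ c in Ioi (0:ℝ), lev φ s (c ^ ((m:ℝ)⁻¹)) := fun s =>
    layercake hm hφ0 hanti s
  have hGint : ∀ s, Integrable (fun c => lev φ s (c ^ ((m:ℝ)⁻¹)))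
      (volume.restrict (Ioi (0:ℝ))) := by
    intro s
    have h := integrable_lev hm hφ0 hanti one_pos s
    simpa using h
  have onesided : ∀ s0 s1 a b : ℝ, 0 ≤ a → 0 < b → a + b = 1 → s0 ≤ M + 1 →
      b^(m+1) * G s1 ≤ G (a*s0+b*s1) := by
    intro s0 s1 a b ha hb hab hs0
    have hk : (0:ℝ) < (b⁻¹)^m := by positivity
    have hpt : ∀ c ∈ Ioi (0:ℝ),
        b * lev φ s1 (((b⁻¹)^m*c) ^ ((m:ℝ)⁻¹)) ≤ lev φ (a*s0+b*s1) (c ^ ((m:ℝ)⁻¹)) := by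
      intro c hc
      have hc' : (0:ℝ) < c := hc
      have hkc : ((b⁻¹)^m*c) ^ ((m:ℝ)⁻¹) = b⁻¹ * c ^ ((m:ℝ)⁻¹) := by
        rw [Real.mul_rpow (by positivity) hc'.le,
          Real.pow_rpow_inv_natCast (by positivity) hm]
      have hv : 0 < ((b⁻¹)^m*c) ^ ((m:ℝ)⁻¹) := by positivity
      have key := lev_key_one hφ0 hanti hconc hzero (s1 := s1) ha hb hab hv hs0
      have hbv : b * (((b⁻¹)^m*c) ^ ((m:ℝ)⁻¹)) = c ^ ((m:ℝ)⁻¹) := by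
        rw [hkc]
        field_simp
      rwa [hbv] at key
    have hint : ∫ c in Ioi (0:ℝ), b * lev φ s1 (((b⁻¹)^m*c) ^ ((m:ℝ)⁻¹))
        ≤ G (a*s0+b*s1) := by
      rw [hGlc (a*s0+b*s1)]
      exact setIntegral_mono_on
        ((integrable_lev hm hφ0 hanti hk s1).const_mul b) (hGint _) measurableSet_Ioi hpt
    have hscale : ∫ c in Ioi (0:ℝ), b * lev φ s1 (((b⁻¹)^m*c) ^ ((m:ℝ)⁻¹))
        = b * (((b⁻¹)^m)⁻¹ * G s1) := by
      rw [integral_const_mul, integral_lev_scale hk, ← hGlc]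
    have hkinv : ((b⁻¹)^m)⁻¹ = b^m := by rw [inv_pow, inv_inv]
    rw [hscale, hkinv] at hint
    calc b^(m+1) * G s1 = b * (b^m * G s1) := by ring
      _ ≤ G (a*s0+b*s1) := hint
  show ConcaveOn ℝ (Iic (M+1)) (fun s => G s ^ (((m:ℝ)+1)⁻¹))
  refine ⟨convex_Iic _, ?_⟩
  intro s0 hs0 s1 hs1 a b ha hb hab
  simp only [smul_eq_mul]
  rcases eq_or_lt_of_le ha with haz|ha'
  · have hb1 : b = 1 := by linarith
    rw [← haz, hb1]
    norm_num
  rcases eq_or_lt_of_le hb with hbz|hb'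
  · have ha1 : a = 1 := by linarith
    rw [← hbz, ha1]
    norm_num
  have hpow : ∀ x : ℝ, 0 < x → (x^(m+1) : ℝ) ^ (((m:ℝ)+1)⁻¹) = x := by
    intro x hx
    rw [← Real.rpow_natCast x (m+1), ← Real.rpow_mul hx.le]
    push_cast
    rw [mul_inv_cancel₀ (by positivity), Real.rpow_one]
  rcases eq_or_lt_of_le (hGnn s0) with hG0|hG0
  · have hb1 := onesided s0 s1 a b ha'.le hb' hab hs0
    have hstep : b * (G s1) ^ (((m:ℝ)+1)⁻¹) ≤ (G (a*s0+b*s1)) ^ (((m:ℝ)+1)⁻¹) := by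
      calc b * (G s1) ^ (((m:ℝ)+1)⁻¹) = (b^(m+1) * G s1) ^ (((m:ℝ)+1)⁻¹) := by
            rw [Real.mul_rpow (by positivity) (hGnn s1), hpow b hb']
        _ ≤ (G (a*s0+b*s1)) ^ (((m:ℝ)+1)⁻¹) :=
            Real.rpow_le_rpow (mul_nonneg (by positivity) (hGnn s1)) hb1 hp.le
    rw [← hG0, Real.zero_rpow hp.ne', mul_zero, zero_add]
    exact hstep
  rcases eq_or_lt_of_le (hGnn s1) with hG1|hG1
  · have hb1 := onesided s1 s0 b a hb'.le ha' (by linarith) hs1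
    rw [show b*s1+a*s0 = a*s0+b*s1 by ring] at hb1
    have hstep : a * (G s0) ^ (((m:ℝ)+1)⁻¹) ≤ (G (a*s0+b*s1)) ^ (((m:ℝ)+1)⁻¹) := by
      calc a * (G s0) ^ (((m:ℝ)+1)⁻¹) = (a^(m+1) * G s0) ^ (((m:ℝ)+1)⁻¹) := by
            rw [Real.mul_rpow (by positivity) (hGnn s0), hpow a ha']
        _ ≤ (G (a*s0+b*s1)) ^ (((m:ℝ)+1)⁻¹) :=
            Real.rpow_le_rpow (mul_nonneg (by positivity) (hGnn s0)) hb1 hp.le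
    rw [← hG1, Real.zero_rpow hp.ne', mul_zero, add_zero]
    exact hstep
  -- main case
  have hβ0 : 0 < φ (s0 - 1) := by
    rcases eq_or_lt_of_le (hφ0 (s0 - 1)) with hz|h
    · exfalso
      have hzero0 : ∀ x ∈ Icc (-1:ℝ) 1, φ (s0 - x) ^ m = (0:ℝ) := by
        intro x hx
        have h1 : φ (s0 - x) ≤ 0 := by
          rw [hz]
          exact hanti (by linarith [hx.2])
        rw [le_antisymm h1 (hφ0 _), zero_pow hm]
      have : G s0 = 0 := by
        show (∫ x in Icc (-1:ℝ) 1, φ (s0 - x) ^ m) = 0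
        rw [setIntegral_congr_fun measurableSet_Icc hzero0]
        simp
      linarith
    · exact h
  have hβ1 : 0 < φ (s1 - 1) := by
    rcases eq_or_lt_of_le (hφ0 (s1 - 1)) with hz|h
    · exfalso
      have hzero1 : ∀ x ∈ Icc (-1:ℝ) 1, φ (s1 - x) ^ m = (0:ℝ) := by
        intro x hx
        have h1 : φ (s1 - x) ≤ 0 := by
          rw [hz]
          exact hanti (by linarith [hx.2])
        rw [le_antisymm h1 (hφ0 _), zero_pow hm]
      have : G s1 = 0 := by
        show (∫ x in Icc (-1:ℝ) 1, φ (s1 - x) ^ m) = 0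
        rw [setIntegral_congr_fun measurableSet_Icc hzero1]
        simp
      linarith
    · exact h
  have hB : 0 < a*φ (s0 - 1)+b*φ (s1 - 1) := by positivity
  have hk0 : (0:ℝ) < (φ (s0 - 1)/(a*φ (s0 - 1)+b*φ (s1 - 1)))^m := by positivity
  have hk1 : (0:ℝ) < (φ (s1 - 1)/(a*φ (s0 - 1)+b*φ (s1 - 1)))^m := by positivity
  have hkc0 : ∀ c : ℝ, 0 < c →
      ((φ (s0 - 1)/(a*φ (s0 - 1)+b*φ (s1 - 1)))^m*c) ^ ((m:ℝ)⁻¹)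
        = (φ (s0 - 1)/(a*φ (s0 - 1)+b*φ (s1 - 1))) * c ^ ((m:ℝ)⁻¹) := by
    intro c hc
    rw [Real.mul_rpow (by positivity) hc.le, Real.pow_rpow_inv_natCast (by positivity) hm]
  have hkc1 : ∀ c : ℝ, 0 < c →
      ((φ (s1 - 1)/(a*φ (s0 - 1)+b*φ (s1 - 1)))^m*c) ^ ((m:ℝ)⁻¹)
        = (φ (s1 - 1)/(a*φ (s0 - 1)+b*φ (s1 - 1))) * c ^ ((m:ℝ)⁻¹) := by
    intro c hc
    rw [Real.mul_rpow (by positivity) hc.le, Real.pow_rpow_inv_natCast (by positivity) hm]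
  have hpt : ∀ c ∈ Ioi (0:ℝ),
      a * lev φ s0 (((φ (s0 - 1)/(a*φ (s0 - 1)+b*φ (s1 - 1)))^m*c) ^ ((m:ℝ)⁻¹))
        + b * lev φ s1 (((φ (s1 - 1)/(a*φ (s0 - 1)+b*φ (s1 - 1)))^m*c) ^ ((m:ℝ)⁻¹))
      ≤ lev φ (a*s0+b*s1) (c ^ ((m:ℝ)⁻¹)) := by
    intro c hc
    have hc' : (0:ℝ) < c := hc
    have hcκ : 0 < c ^ ((m:ℝ)⁻¹) := by positivity
    rw [hkc0 c hc', hkc1 c hc']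
    rcases lt_or_ge (c ^ ((m:ℝ)⁻¹)) (a*φ (s0 - 1)+b*φ (s1 - 1)) with hcB | hcB
    · have hu0 : (φ (s0 - 1)/(a*φ (s0 - 1)+b*φ (s1 - 1))) * c ^ ((m:ℝ)⁻¹) < φ (s0 - 1) := by
        rw [div_mul_eq_mul_div, div_lt_iff₀ hB]
        exact mul_lt_mul_of_pos_left hcB hβ0
      have hu1 : (φ (s1 - 1)/(a*φ (s0 - 1)+b*φ (s1 - 1))) * c ^ ((m:ℝ)⁻¹) < φ (s1 - 1) := by
        rw [div_mul_eq_mul_div, div_lt_iff₀ hB]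
        exact mul_lt_mul_of_pos_left hcB hβ1
      have key := lev_key hφ0 hanti hconc hzero ha' hb' hab
        (by positivity : (0:ℝ) < (φ (s0 - 1)/(a*φ (s0 - 1)+b*φ (s1 - 1))) * c ^ ((m:ℝ)⁻¹))
        (by positivity : (0:ℝ) < (φ (s1 - 1)/(a*φ (s0 - 1)+b*φ (s1 - 1))) * c ^ ((m:ℝ)⁻¹))
        hu0 hu1
      have hsum : a*((φ (s0 - 1)/(a*φ (s0 - 1)+b*φ (s1 - 1))) * c ^ ((m:ℝ)⁻¹))
          + b*((φ (s1 - 1)/(a*φ (s0 - 1)+b*φ (s1 - 1))) * c ^ ((m:ℝ)⁻¹)) = c ^ ((m:ℝ)⁻¹) := by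
        field_simp
      rwa [hsum] at key
    · have hz0 : lev φ s0 ((φ (s0 - 1)/(a*φ (s0 - 1)+b*φ (s1 - 1))) * c ^ ((m:ℝ)⁻¹)) = 0 := by
        refine lev_eq_zero hanti ?_
        rw [div_mul_eq_mul_div, le_div_iff₀ hB]
        exact mul_le_mul_of_nonneg_left hcB hβ0.le
      have hz1 : lev φ s1 ((φ (s1 - 1)/(a*φ (s0 - 1)+b*φ (s1 - 1))) * c ^ ((m:ℝ)⁻¹)) = 0 := by
        refine lev_eq_zero hanti ?_
        rw [div_mul_eq_mul_div, le_div_iff₀ hB]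
        exact mul_le_mul_of_nonneg_left hcB hβ1.le
      rw [hz0, hz1, mul_zero, mul_zero, add_zero]
      exact lev_nonneg
  have hint : a * ((((φ (s0 - 1)/(a*φ (s0 - 1)+b*φ (s1 - 1)))^m)⁻¹) * G s0)
      + b * ((((φ (s1 - 1)/(a*φ (s0 - 1)+b*φ (s1 - 1)))^m)⁻¹) * G s1)
      ≤ G (a*s0+b*s1) := by
    have h1 : Integrable (fun c : ℝ => a * lev φ s0 (((φ (s0 - 1)/(a*φ (s0 - 1)+b*φ (s1 - 1)))^m*c) ^ ((m:ℝ)⁻¹))) (volume.restrict (Ioi (0:ℝ))) :=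
      (integrable_lev hm hφ0 hanti hk0 s0).const_mul a
    have h2 : Integrable (fun c : ℝ => b * lev φ s1 (((φ (s1 - 1)/(a*φ (s0 - 1)+b*φ (s1 - 1)))^m*c) ^ ((m:ℝ)⁻¹))) (volume.restrict (Ioi (0:ℝ))) :=
      (integrable_lev hm hφ0 hanti hk1 s1).const_mul b
    have hadd : Integrable (fun c : ℝ =>
        a * lev φ s0 (((φ (s0 - 1)/(a*φ (s0 - 1)+b*φ (s1 - 1)))^m*c) ^ ((m:ℝ)⁻¹))
        + b * lev φ s1 (((φ (s1 - 1)/(a*φ (s0 - 1)+b*φ (s1 - 1)))^m*c) ^ ((m:ℝ)⁻¹)))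
        (volume.restrict (Ioi (0:ℝ))) := h1.add h2
    have hmono := setIntegral_mono_on hadd (hGint (a*s0+b*s1)) measurableSet_Ioi hpt
    rw [hGlc (a*s0+b*s1)]
    refine le_trans (le_of_eq ?_) hmono
    rw [integral_add h1 h2, integral_const_mul, integral_const_mul,
      integral_lev_scale hk0, integral_lev_scale hk1, ← hGlc, ← hGlc]
  have hk0inv : (((φ (s0 - 1)/(a*φ (s0 - 1)+b*φ (s1 - 1)))^m)⁻¹)
      = ((a*φ (s0 - 1)+b*φ (s1 - 1))/φ (s0 - 1))^m := by
    rw [← inv_pow, inv_div]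
  have hk1inv : (((φ (s1 - 1)/(a*φ (s0 - 1)+b*φ (s1 - 1)))^m)⁻¹)
      = ((a*φ (s0 - 1)+b*φ (s1 - 1))/φ (s1 - 1))^m := by
    rw [← inv_pow, inv_div]
  have final := holder_aux (m := m) ha' hb' hab hβ0 hβ1 hG0 hG1
  refine le_trans final (Real.rpow_le_rpow (by positivity) ?_ hp.le)
  calc a * ((a*φ (s0 - 1)+b*φ (s1 - 1))/φ (s0 - 1))^m * G s0
        + b * ((a*φ (s0 - 1)+b*φ (s1 - 1))/φ (s1 - 1))^m * G s1
      = a * ((((φ (s0 - 1)/(a*φ (s0 - 1)+b*φ (s1 - 1)))^m)⁻¹) * G s0)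
        + b * ((((φ (s1 - 1)/(a*φ (s0 - 1)+b*φ (s1 - 1)))^m)⁻¹) * G s1) := by
        rw [hk0inv, hk1inv]; ring
    _ ≤ G (a*s0+b*s1) := hint

/-! ### The measure-theoretic recursion -/

noncomputable def Qe (n : ℕ) (s : ℝ) : ENNReal := unifCube n {u | s < ∑ i, u i}

noncomputable def Qfun (n : ℕ) (s : ℝ) : ℝ := (Qe n s).toReal

instance : IsProbabilityMeasure ((2 : ENNReal)⁻¹ • volume.restrict (Icc (-1 : ℝ) 1)) := by
  constructor
  rw [Measure.smul_apply, Measure.restrict_apply MeasurableSet.univ, Set.univ_inter,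
    Real.volume_Icc]
  norm_num
  exact ENNReal.inv_mul_cancel (by norm_num) (by norm_num)

instance (n : ℕ) : IsProbabilityMeasure (unifCube n) := by
  unfold unifCube; infer_instance

lemma measurableSet_sumLt (n : ℕ) (s : ℝ) : MeasurableSet {u : Fin n → ℝ | s < ∑ i, u i} :=
  measurableSet_lt measurable_const (Finset.measurable_sum _ fun i _ => measurable_pi_apply i)

lemma Qe_le_one (n : ℕ) (s : ℝ) : Qe n s ≤ 1 := prob_le_one

lemma Qe_ne_top (n : ℕ) (s : ℝ) : Qe n s ≠ ⊤ :=
  ne_top_of_le_ne_top (by norm_num) (Qe_le_one n s)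

lemma Qe_anti (n : ℕ) : Antitone (Qe n) := fun s s' h =>
  measure_mono fun u hu => lt_of_le_of_lt h hu

lemma Qfun_nonneg (n : ℕ) (s : ℝ) : 0 ≤ Qfun n s := ENNReal.toReal_nonneg

lemma Qfun_anti (n : ℕ) : Antitone (Qfun n) := fun s s' h =>
  ENNReal.toReal_mono (Qe_ne_top n s) (Qe_anti n h)

lemma Qe_succ (n : ℕ) (s : ℝ) :
    Qe (n+1) s = 2⁻¹ * ∫⁻ x in Icc (-1:ℝ) 1, Qe n (s - x) := by
  have hmp := measurePreserving_piFinSuccAbove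
    (fun _ : Fin (n+1) => (2 : ENNReal)⁻¹ • volume.restrict (Icc (-1 : ℝ) 1)) 0
  have hTmeas : MeasurableSet {p : ℝ × (Fin n → ℝ) | s - p.1 < ∑ i, p.2 i} :=
    measurableSet_lt (measurable_const.sub measurable_fst)
      (Finset.measurable_sum Finset.univ fun i _ => (measurable_pi_apply i).comp measurable_snd)
  have hpre : {u : Fin (n+1) → ℝ | s < ∑ i, u i}
      = (MeasurableEquiv.piFinSuccAbove (fun _ : Fin (n+1) => ℝ) 0) ⁻¹'
        {p : ℝ × (Fin n → ℝ) | s - p.1 < ∑ i, p.2 i} := by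
    ext u
    simp only [mem_setOf_eq, mem_preimage, MeasurableEquiv.piFinSuccAbove_apply]
    rw [Fin.sum_univ_succAbove u 0]
    rw [sub_lt_iff_lt_add']
    rfl
  have key : Qe (n+1) s = (((2 : ENNReal)⁻¹ • volume.restrict (Icc (-1 : ℝ) 1)).prod
      (Measure.pi fun _ : Fin n => (2 : ENNReal)⁻¹ • volume.restrict (Icc (-1 : ℝ) 1)))
      {p : ℝ × (Fin n → ℝ) | s - p.1 < ∑ i, p.2 i} := by
    rw [Qe, unifCube, hpre]
    exact hmp.measure_preimage hTmeas.nullMeasurableSet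
  rw [key, Measure.prod_apply hTmeas]
  have hin : ∀ x : ℝ,
      (Measure.pi fun _ : Fin n => (2 : ENNReal)⁻¹ • volume.restrict (Icc (-1 : ℝ) 1))
        (Prod.mk x ⁻¹' {p : ℝ × (Fin n → ℝ) | s - p.1 < ∑ i, p.2 i}) = Qe n (s - x) := by
    intro x
    rfl
  rw [lintegral_congr hin, lintegral_smul_measure, smul_eq_mul]

lemma Qe_measurable_comp (n : ℕ) (s : ℝ) : Measurable fun x : ℝ => Qe n (s - x) := by
  have h1 : Measurable (Qe n) := (Qe_anti n).measurable
  exact h1.comp (measurable_const.sub measurable_id)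

lemma Qfun_succ (n : ℕ) (s : ℝ) :
    Qfun (n+1) s = 2⁻¹ * ∫ x in Icc (-1:ℝ) 1, Qfun n (s - x) := by
  have hfin : ∀ᵐ x ∂(volume.restrict (Icc (-1:ℝ) 1)), Qe n (s - x) < ⊤ :=
    Filter.Eventually.of_forall fun x => lt_of_le_of_lt (Qe_le_one n _) (by norm_num)
  rw [Qfun, Qe_succ n s, ENNReal.toReal_mul]
  congr 1
  · simp
  · rw [← integral_toReal (Qe_measurable_comp n s).aemeasurable hfin]
    rfl

lemma Qe_zero (s : ℝ) : Qe 0 s = if s < 0 then 1 else 0 := by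
  rw [Qe, unifCube, Measure.pi_of_empty]
  by_cases h : s < 0
  · rw [if_pos h]
    have hset : {u : Fin 0 → ℝ | s < ∑ i, u i} = univ := by
      ext u
      simpa using h
    rw [hset]
    simp
  · rw [if_neg h]
    have hset : {u : Fin 0 → ℝ | s < ∑ i, u i} = ∅ := by
      ext u
      simpa using h
    rw [hset]
    simp

lemma vol_aux (s : ℝ) : volume (Ioi s ∩ Icc (-1:ℝ) 1) = ENNReal.ofReal (min (1-s) 2) := by
  rcases le_or_gt (-1:ℝ) s with h | h
  · have hset : Ioi s ∩ Icc (-1:ℝ) 1 = Ioc s 1 := by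
      ext x
      simp only [mem_inter_iff, mem_Ioi, mem_Icc, mem_Ioc]
      constructor
      · rintro ⟨h1, _, h3⟩
        exact ⟨h1, h3⟩
      · rintro ⟨h1, h2⟩
        exact ⟨h1, by linarith, h2⟩
    rw [hset, Real.volume_Ioc, min_eq_left (by linarith)]
  · have hset : Ioi s ∩ Icc (-1:ℝ) 1 = Icc (-1:ℝ) 1 :=
      inter_eq_self_of_subset_right fun x hx => lt_of_lt_of_le h hx.1
    rw [hset, Real.volume_Icc, min_eq_right (by linarith)]
    norm_num

lemma Qfun_one_raw (s : ℝ) : Qfun 1 s = 2⁻¹ * (ENNReal.ofReal (min (1-s) 2)).toReal := by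
  rw [Qfun_succ 0 s]
  congr 1
  have hQ0 : ∀ x ∈ Icc (-1:ℝ) 1, Qfun 0 (s - x) = (Ioi s).indicator (fun _ => (1:ℝ)) x := by
    intro x _
    rw [Qfun, Qe_zero]
    by_cases h : s < x
    · rw [if_pos (by linarith), indicator_of_mem (mem_Ioi.2 h)]
      simp
    · rw [if_neg (by simp; linarith [not_lt.1 h]), indicator_of_notMem (by simpa using h)]
      simp
  rw [setIntegral_congr_fun measurableSet_Icc hQ0,
    setIntegral_indicator measurableSet_Ioi, setIntegral_const, inter_comm, measureReal_def, vol_aux]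
  simp

lemma Qfun_one (s : ℝ) (hs : s ≤ 1) : Qfun 1 s = 2⁻¹ * min (1-s) 2 := by
  rw [Qfun_one_raw, ENNReal.toReal_ofReal (le_min (by linarith) (by norm_num))]

lemma Qfun_one_zero (s : ℝ) (hs : (1:ℝ) ≤ s) : Qfun 1 s = 0 := by
  rw [Qfun_one_raw, min_eq_left (by linarith), ENNReal.ofReal_eq_zero.2 (by linarith)]
  simp

lemma concaveOn_congr {S : Set ℝ} {f g : ℝ → ℝ} (hf : ConcaveOn ℝ S f)
    (h : ∀ x ∈ S, f x = g x) : ConcaveOn ℝ S g :=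
  ⟨hf.1, fun x hx y hy a b ha hb hab => by
    rw [← h _ hx, ← h _ hy, ← h _ (hf.1 hx hy ha hb hab)]
    exact hf.2 hx hy ha hb hab⟩

/-! ### The main induction -/

lemma invariant : ∀ n : ℕ, 1 ≤ n →
    (∀ s : ℝ, (n:ℝ) ≤ s → Qfun n s = 0) ∧
    ConcaveOn ℝ (Iic (n:ℝ)) (fun s => Qfun n s ^ ((n:ℝ)⁻¹)) := by
  intro n
  induction n with
  | zero => intro h; exact absurd h (by norm_num)
  | succ k ih =>
    intro _
    by_cases hk : k = 0
    · subst hk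
      constructor
      · intro s hs
        exact Qfun_one_zero s (by simpa using hs)
      · have hval : ∀ s ∈ Iic (1:ℝ), (2⁻¹:ℝ) * min (1-s) 2 = Qfun 1 s ^ (((0+1:ℕ):ℝ))⁻¹ := by
          intro s hs
          rw [Qfun_one s hs]
          norm_num
        have haff : ConcaveOn ℝ (Iic (1:ℝ)) (fun s : ℝ => 1 - s) := by
          have h1 : ConvexOn ℝ (Iic (1:ℝ)) (fun s : ℝ => s - 1) :=
            (convexOn_id (convex_Iic 1)).sub (concaveOn_const 1 (convex_Iic 1))
          have h2 := h1.neg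
          refine concaveOn_congr h2 fun x _ => by
            show -(x - 1) = 1 - x
            ring
        have hmin : ConcaveOn ℝ (Iic (1:ℝ)) (fun s : ℝ => min (1-s) 2) := by
          have h := haff.inf (concaveOn_const (2:ℝ) (convex_Iic 1))
          refine concaveOn_congr h fun x _ => rfl
        have hsc := hmin.smul (by norm_num : (0:ℝ) ≤ 2⁻¹)
        have hfinal : ConcaveOn ℝ (Iic (1:ℝ))
            (fun s => Qfun 1 s ^ (((0+1:ℕ):ℝ))⁻¹) := by
          refine concaveOn_congr hsc fun s hs => ?_
          rw [smul_eq_mul]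
          exact hval s hs
        have hset : Iic (((0+1:ℕ)):ℝ) = Iic (1:ℝ) := by norm_num
        rw [hset]
        exact hfinal
    · obtain ⟨hz, hconc⟩ := ih (Nat.one_le_iff_ne_zero.2 hk)
      have hknz : ((k:ℝ))⁻¹ ≠ 0 := inv_ne_zero (Nat.cast_ne_zero.2 hk)
      have hφ0 : ∀ t, 0 ≤ Qfun k t ^ ((k:ℝ)⁻¹) := fun t =>
        Real.rpow_nonneg (Qfun_nonneg k t) _
      have hanti : Antitone (fun t => Qfun k t ^ ((k:ℝ)⁻¹)) := fun t t' h =>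
        Real.rpow_le_rpow (Qfun_nonneg k t') (Qfun_anti k h) (by positivity)
      have hzero : ∀ t : ℝ, (k:ℝ) ≤ t → Qfun k t ^ ((k:ℝ)⁻¹) = 0 := fun t ht => by
        rw [hz t ht, Real.zero_rpow hknz]
      have hstep := oneDStep (m := k) hk hφ0 hanti hconc hzero
      have hid : ∀ s : ℝ, (∫ x in Icc (-1:ℝ) 1, (Qfun k (s - x) ^ ((k:ℝ)⁻¹)) ^ k)
          = 2 * Qfun (k+1) s := by
        intro s
        have hpt : ∀ x ∈ Icc (-1:ℝ) 1, (Qfun k (s - x) ^ ((k:ℝ)⁻¹)) ^ k = Qfun k (s - x) := by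
          intro x _
          rw [← Real.rpow_natCast (Qfun k (s - x) ^ ((k:ℝ)⁻¹)) k,
            ← Real.rpow_mul (Qfun_nonneg k _), inv_mul_cancel₀ (Nat.cast_ne_zero.2 hk),
            Real.rpow_one]
        rw [setIntegral_congr_fun measurableSet_Icc hpt, Qfun_succ k s]
        ring
      have hzsucc : ∀ s : ℝ, ((k+1:ℕ):ℝ) ≤ s → Qfun (k+1) s = 0 := by
        intro s hs
        push_cast at hs
        rw [Qfun_succ k s]
        have hpt : ∀ x ∈ Icc (-1:ℝ) 1, Qfun k (s - x) = (0:ℝ) := fun x hx =>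
          hz _ (by linarith [hx.2])
        rw [setIntegral_congr_fun measurableSet_Icc hpt]
        simp
      refine ⟨hzsucc, ?_⟩
      have heq : ∀ s : ℝ, (2⁻¹:ℝ) ^ (((k:ℝ)+1)⁻¹)
          * ((∫ x in Icc (-1:ℝ) 1, (Qfun k (s - x) ^ ((k:ℝ)⁻¹)) ^ k) ^ (((k:ℝ)+1)⁻¹))
          = Qfun (k+1) s ^ (((k:ℝ)+1)⁻¹) := by
        intro s
        rw [hid s, Real.mul_rpow (by norm_num) (Qfun_nonneg (k+1) s),
          ← mul_assoc, ← Real.mul_rpow (by norm_num) (by norm_num)]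
        norm_num
      have hsc := hstep.smul (by positivity : (0:ℝ) ≤ (2⁻¹:ℝ) ^ (((k:ℝ)+1)⁻¹))
      have hfinal : ConcaveOn ℝ (Iic ((k:ℝ)+1))
          (fun s => Qfun (k+1) s ^ ((k:ℝ)+1)⁻¹) := by
        refine concaveOn_congr hsc fun s _ => ?_
        rw [smul_eq_mul]
        exact heq s
      have hset : Iic (((k+1:ℕ)):ℝ) = Iic ((k:ℝ)+1) := by push_cast; ring_nf
      have hexp : (((k+1:ℕ)):ℝ)⁻¹ = ((k:ℝ)+1)⁻¹ := by push_cast; ring_nf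
      rw [hset, hexp]
      exact hfinal

end TailAux

/-- For the average `X` of `n` i.i.d. uniform random variables on `[-1,1]`, the
function `t ↦ P(X > t)^(1/n)` is concave on `[-1,1]`. -/
theorem tailP_rpow_concaveOn (n : ℕ) (hn : 0 < n) :
    ConcaveOn ℝ (Icc (-1 : ℝ) 1) (fun t => tailP n t ^ ((1 : ℝ) / n)) := by
  obtain ⟨-, hconc⟩ := TailAux.invariant n hn
  have key : ∀ t : ℝ, tailP n t = TailAux.Qfun n ((n:ℝ) * t) := by
    intro t
    have hset : {u : Fin n → ℝ | t < avgCoord n u} = {u | (n:ℝ) * t < ∑ i, u i} := by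
      ext u
      simp only [mem_setOf_eq, avgCoord]
      rw [lt_div_iff₀ (by exact_mod_cast hn), mul_comm]
    rw [tailP, hset]
    rfl
  refine ⟨convex_Icc _ _, fun x hx y hy a b ha hb hab => ?_⟩
  simp only [key, one_div]
  have hx' : (n:ℝ) * x ∈ Iic (n:ℝ) := by
    have : (n:ℝ) * x ≤ (n:ℝ) * 1 := by
      apply mul_le_mul_of_nonneg_left hx.2 (by positivity)
    simpa using this
  have hy' : (n:ℝ) * y ∈ Iic (n:ℝ) := by
    have : (n:ℝ) * y ≤ (n:ℝ) * 1 := by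
      apply mul_le_mul_of_nonneg_left hy.2 (by positivity)
    simpa using this
  have h := hconc.2 hx' hy' ha hb hab
  have harg : (n:ℝ) * (a • x + b • y) = a • ((n:ℝ)*x) + b • ((n:ℝ)*y) := by
    simp only [smul_eq_mul]; ring
  rw [harg]
  exact h
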